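/- Let G be a finite group, N an abelian normal subgroup of G, and H a subgroup of G with N ≤ H such that N has a complement in H and gcd(|N|, [G : H]) = 1. Then N has a complement in G. -/

import Mathlib

open Pointwise
/-- `K` is a complement of `N` inside the subgroup `H` of `G`:
`K ≤ H`, `K ∩ N = 1` and `KN = H` (as sets). -/
def IsComplementOfIn {G : Type*} [Group G] (K N H : Subgroup G) : Prop :=
  K ≤ H ∧ K ⊓ N = ⊥ ∧ (K : Set G) * (N : Set G) = (H : Set G)

/-- `N` has a complement in the subgroup `H` of `G`. -/
def HasComplementIn {G : Type*} [Group G] (N H : Subgroup G) : Prop :=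
  ∃ K : Subgroup G, IsComplementOfIn K N H

section GaschuetzAux

variable {G : Type*} [Group G]

open scoped Classical in
/-- Projection of `g` onto `N` along `K` (junk value if no decomposition exists). -/
noncomputable def gproj (N K : Subgroup G) (g : G) : N :=
  if h : ∃ a : N, (a : G)⁻¹ * g ∈ K then h.choose else 1

lemma gproj_spec (N K : Subgroup G) (g : G) (h : ∃ a : N, (a : G)⁻¹ * g ∈ K) :
    ((gproj N K g : G))⁻¹ * g ∈ K := by
  rw [gproj]
  rw [dif_pos h]
  exact h.choose_spec

lemma gproj_eq {N K : Subgroup G} (hdisj : K ⊓ N = ⊥) {g : G} (a : N)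
    (h : (a : G)⁻¹ * g ∈ K) : gproj N K g = a := by
  have hs := gproj_spec N K g ⟨a, h⟩
  set b := gproj N K g with hb
  have hK : (a : G)⁻¹ * (b : G) ∈ K := by
    have := mul_mem h (inv_mem hs)
    simpa [mul_assoc] using this
  have hN : (a : G)⁻¹ * (b : G) ∈ N := mul_mem (inv_mem a.2) b.2
  have h1 : (a : G)⁻¹ * (b : G) ∈ K ⊓ N := ⟨hK, hN⟩
  rw [hdisj, Subgroup.mem_bot] at h1
  exact Subtype.ext (inv_mul_eq_one.mp h1).symm

lemma gexists {N K H : Subgroup G} [N.Normal]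
    (hmul : (K : Set G) * (N : Set G) = (H : Set G)) {h : G} (hh : h ∈ H) :
    ∃ a : N, (a : G)⁻¹ * h ∈ K := by
  have : h ∈ (K : Set G) * (N : Set G) := by rw [hmul]; exact hh
  obtain ⟨k, hk, n, hn, rfl⟩ := this
  refine ⟨⟨k * n * k⁻¹, Subgroup.Normal.conj_mem ‹N.Normal› n hn k⟩, ?_⟩
  show ((k * n * k⁻¹ : G))⁻¹ * (k * n) ∈ K
  have h2 : ((k * n * k⁻¹ : G))⁻¹ * (k * n) = k := by group
  rw [h2]
  exact hk

lemma gproj_of_mem {N K : Subgroup G} (hdisj : K ⊓ N = ⊥) {a : G} (ha : a ∈ N) :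
    gproj N K a = ⟨a, ha⟩ :=
  gproj_eq hdisj ⟨a, ha⟩ (by simpa using one_mem K)

lemma gproj_mul {N K H : Subgroup G} [N.Normal] [IsMulCommutative N]
    (hdisj : K ⊓ N = ⊥) (hmul : (K : Set G) * (N : Set G) = (H : Set G))
    {h h' : G} (hh : h ∈ H) (hh' : h' ∈ H) :
    gproj N K (h * h') = gproj N K h * MulAut.conjNormal h (gproj N K h') := by
  set a₁ := gproj N K h with ha₁
  set a₂ := gproj N K h' with ha₂
  have k₁ : (a₁ : G)⁻¹ * h ∈ K := gproj_spec N K h (gexists hmul hh)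
  have k₂ : (a₂ : G)⁻¹ * h' ∈ K := gproj_spec N K h' (gexists hmul hh')
  apply gproj_eq hdisj
  have hcomm : (h * (a₂ : G)⁻¹ * h⁻¹) * (a₁ : G)⁻¹ = (a₁ : G)⁻¹ * (h * (a₂ : G)⁻¹ * h⁻¹) :=
    Subgroup.mul_comm_of_mem_isMulCommutative N
      (by simpa using Subgroup.Normal.conj_mem ‹N.Normal› _ (inv_mem a₂.2) h)
      (inv_mem a₁.2)
  have key : ((a₁ * MulAut.conjNormal h a₂ : N) : G)⁻¹ * (h * h') =
      ((a₁ : G)⁻¹ * h) * ((a₂ : G)⁻¹ * h') := by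
    push_cast [MulAut.conjNormal_apply]
    calc ((a₁ : G) * (h * (a₂ : G) * h⁻¹))⁻¹ * (h * h')
        = ((h * (a₂ : G)⁻¹ * h⁻¹) * (a₁ : G)⁻¹) * (h * h') := by group
      _ = ((a₁ : G)⁻¹ * (h * (a₂ : G)⁻¹ * h⁻¹)) * (h * h') := by rw [hcomm]
      _ = ((a₁ : G)⁻¹ * h) * ((a₂ : G)⁻¹ * h') := by group
  rw [key]
  exact mul_mem k₁ k₂

end GaschuetzAux

/-- **Gaschütz' theorem.** If `N` is an abelian normal subgroup of a finite group `G`,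
`N ≤ H ≤ G`, `N` has a complement in `H` and `gcd(|N|, [G : H]) = 1`, then `N` has a
complement in `G`. -/
theorem gaschuetz {G : Type*} [Group G] [Finite G] (N H : Subgroup G)
    [N.Normal] [IsMulCommutative N] (hNH : N ≤ H)
    (hcop : Nat.Coprime (Nat.card N) H.index)
    (hcompl : HasComplementIn N H) :
    HasComplementIn N ⊤ := by
  classical
  obtain ⟨K, hKH, hdisj, hmulKN⟩ := hcompl
  haveI : Fintype (G ⧸ H) := Fintype.ofFinite _
  letI : CommGroup N := { (inferInstance : Group N) with mul_comm := mul_comm' }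
  -- membership of the "cocycle" values in H
  have hmem : ∀ (g : G) (q : G ⧸ H), ((g • q).out)⁻¹ * (g * q.out) ∈ H := by
    intro g q
    rw [← QuotientGroup.eq]
    rw [QuotientGroup.out_eq']
    rw [show (QuotientGroup.mk (g * q.out) : G ⧸ H) = g • (QuotientGroup.mk q.out) from rfl]
    rw [QuotientGroup.out_eq']
  -- the terms and the map φ
  set term : G → G ⧸ H → N :=
    fun g q => MulAut.conjNormal ((g • q).out) (gproj N K (((g • q).out)⁻¹ * (g * q.out)))
    with hterm_def
  set φ : G → N := fun g => ∏ q : G ⧸ H, term g q with hφ_def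
  -- crossed homomorphism property
  have key : ∀ g g' : G, φ (g * g') = φ g * MulAut.conjNormal g (φ g') := by
    intro g g'
    have hterm : ∀ q : G ⧸ H,
        term (g * g') q = term g (g' • q) * MulAut.conjNormal g (term g' q) := by
      intro q
      have hvq : (g * g') • q = g • (g' • q) := mul_smul g g' q
      set t := q.out
      set u := (g' • q).out
      set v := (g • (g' • q)).out with hv
      have h1 : v⁻¹ * (g * u) ∈ H := hmem g (g' • q)
      have h2 : u⁻¹ * (g' * t) ∈ H := hmem g' q
      have hsplit : v⁻¹ * ((g * g') * t) = (v⁻¹ * (g * u)) * (u⁻¹ * (g' * t)) := by group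
      have : term (g * g') q = MulAut.conjNormal v
          (gproj N K ((v⁻¹ * (g * u)) * (u⁻¹ * (g' * t)))) := by
        rw [hterm_def]
        simp only [hvq]
        rw [hsplit]
      rw [this, gproj_mul hdisj hmulKN h1 h2, map_mul, ← MulAut.mul_apply, ← map_mul,
        show v * (v⁻¹ * (g * u)) = g * u by group, map_mul, MulAut.mul_apply]
    calc φ (g * g') = ∏ q : G ⧸ H, (term g (g' • q) * MulAut.conjNormal g (term g' q)) := by
          rw [hφ_def]; exact Finset.prod_congr rfl (fun q _ => hterm q)
      _ = (∏ q : G ⧸ H, term g (g' • q)) * ∏ q : G ⧸ H, MulAut.conjNormal g (term g' q) := by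
          rw [Finset.prod_mul_distrib]
      _ = φ g * MulAut.conjNormal g (φ g') := by
          rw [hφ_def]
          congr 1
          · exact Equiv.prod_comp (MulAction.toPerm g' : Equiv.Perm (G ⧸ H)) (term g)
          · exact (map_prod (MulAut.conjNormal g) _ _).symm
  -- φ on N is the index-th power
  have hφN : ∀ (a : G) (ha : a ∈ N), φ a = (⟨a, ha⟩ : N) ^ (Fintype.card (G ⧸ H)) := by
    intro a ha
    have hterma : ∀ q : G ⧸ H, term a q = ⟨a, ha⟩ := by
      intro q
      have hfix : a • q = q := by
        conv_lhs => rw [← QuotientGroup.out_eq' q]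
        show (QuotientGroup.mk (a * q.out) : G ⧸ H) = q
        conv_rhs => rw [← QuotientGroup.out_eq' q]
        rw [QuotientGroup.eq]
        have heq : (a * q.out)⁻¹ * q.out = (q.out)⁻¹ * a⁻¹ * ((q.out)⁻¹)⁻¹ := by group
        rw [heq]
        exact hNH (Subgroup.Normal.conj_mem ‹N.Normal› a⁻¹ (inv_mem ha) (q.out)⁻¹)
      have hm : (q.out)⁻¹ * (a * q.out) ∈ N := by
        simpa [mul_assoc] using Subgroup.Normal.conj_mem ‹N.Normal› a ha (q.out)⁻¹
      rw [hterm_def]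
      simp only [hfix]
      rw [gproj_of_mem hdisj hm]
      ext
      simp [mul_assoc]
    rw [hφ_def]
    simp only [hterma]
    rw [Finset.prod_const, Finset.card_univ]
  have hcard : Fintype.card (G ⧸ H) = H.index := by
    rw [Subgroup.index, Nat.card_eq_fintype_card]
  -- φ 1 = 1
  have hφ1 : φ 1 = 1 := by
    have h1 := key 1 1
    simp only [mul_one, map_one, MulAut.one_apply] at h1
    exact (left_eq_mul.mp h1)
  -- the complement
  have hK' : ∀ {g g' : G}, φ g = 1 → φ g' = 1 → φ (g * g') = 1 := by
    intro g g' hg hg'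
    rw [key, hg, hg', map_one, one_mul]
  refine ⟨{ carrier := {g : G | φ g = 1},
            mul_mem' := fun hg hg' => hK' hg hg',
            one_mem' := hφ1,
            inv_mem' := ?_ }, le_top, ?_, ?_⟩
  · intro g hg
    simp only [Set.mem_setOf_eq] at hg ⊢
    have := key g⁻¹ g
    rw [inv_mul_cancel, hφ1, hg, map_one, mul_one] at this
    exact this.symm
  · -- trivial intersection
    rw [eq_bot_iff]
    intro x hx
    have hx2 : x ∈ N := hx.2
    have hx1 : φ x = 1 := hx.1
    rw [hφN x hx2, hcard] at hx1
    have hdvd1 : orderOf (⟨x, hx2⟩ : N) ∣ H.index := orderOf_dvd_of_pow_eq_one hx1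
    have hdvd2 : orderOf (⟨x, hx2⟩ : N) ∣ Nat.card N := orderOf_dvd_natCard _
    have : orderOf (⟨x, hx2⟩ : N) = 1 :=
      Nat.dvd_one.mp (hcop ▸ Nat.dvd_gcd hdvd2 hdvd1)
    have hx : (⟨x, hx2⟩ : N) = 1 := orderOf_eq_one_iff.mp this
    have : x = 1 := congrArg Subtype.val hx
    simp [this]
  · -- K' * N = ⊤
    apply Set.eq_of_subset_of_subset
    · intro g _; trivial
    · intro g _
      obtain ⟨a, ha⟩ : ∃ a : N, a ^ H.index = (φ g)⁻¹ := by
        have := Nat.Coprime.pow_left_bijective (G := N) (n := H.index) hcop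
        exact this.surjective _
      have hφag : φ ((a : G) * g) = 1 := by
        have hconj : MulAut.conjNormal (a : G) (φ g) = φ g := by
          ext
          simp only [MulAut.conjNormal_apply]
          have hc := Subgroup.mul_comm_of_mem_isMulCommutative N a.2 (φ g).2
          calc ((a : G) * ((φ g : N) : G)) * (a : G)⁻¹
              = (((φ g : N) : G) * (a : G)) * (a : G)⁻¹ := by rw [hc]
            _ = ((φ g : N) : G) := by group
        rw [key, hφN (a : G) a.2, hcard, hconj]
        simp only [Subtype.coe_eta]
        rw [ha, inv_mul_cancel]
      refine ⟨(a : G) * g, hφag, ((a : G) * g)⁻¹ * (a : G)⁻¹ * ((a : G) * g), ?_, by group⟩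
      simpa [mul_assoc] using
        Subgroup.Normal.conj_mem ‹N.Normal› _ (inv_mem a.2) (((a : G) * g)⁻¹)
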